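/- arXiv:2402.02489 — 2 statements merged into one kernel-verified Lean document; each statement's English description precedes it below -/
import Mathlib

section
/- For η > 0 and s, t ∈ ℝ, define g_u : ℝ → ℝ by g_u(x) = (2|x - u| - η)·1_{[u-η, u+η]}(x). Then (3/(2η³)) ∫_{-∞}^{∞} g_s(x) g_t(x) dx = κ(|s - t|/η), where κ(x) = 3x³-3x²-(3/2)x+1 for 0 ≤ x ≤ 1, κ(x) = -x³+3x²-(3/2)x-1 for 1 ≤ x ≤ 2, and κ(x) = 0 for x ≥ 2. In particular, for s = t the integral identity gives (3/(2η³)) ∫ g_t(x)² dx = 1. -/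
open MeasureTheory

noncomputable def kappa (x : ℝ) : ℝ :=
  if x ≤ 1 then 3 * x ^ 3 - 3 * x ^ 2 - (3 / 2) * x + 1
  else if x ≤ 2 then -x ^ 3 + 3 * x ^ 2 - (3 / 2) * x - 1
  else 0

noncomputable def g (η u x : ℝ) : ℝ :=
  (Set.Icc (u - η) (u + η)).indicator (fun y => 2 * |y - u| - η) x

lemma integral_quad (A B C a b : ℝ) :
    ∫ x in a..b, (A * x ^ 2 + B * x + C) =
      A / 3 * (b ^ 3 - a ^ 3) + B / 2 * (b ^ 2 - a ^ 2) + C * (b - a) := by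
  have h : ∀ x : ℝ, HasDerivAt (fun y => A / 3 * y ^ 3 + B / 2 * y ^ 2 + C * y)
      (A * x ^ 2 + B * x + C) x := by
    intro x
    have h1 := ((hasDerivAt_pow 3 x).const_mul (A / 3)).add
      ((hasDerivAt_pow 2 x).const_mul (B / 2))
    have h2 := h1.add ((hasDerivAt_id x).const_mul C)
    refine h2.congr_deriv ?_
    push_cast
    ring
  rw [intervalIntegral.integral_eq_sub_of_hasDerivAt (fun x _ => h x)
    ((by fun_prop : Continuous fun x : ℝ => A * x ^ 2 + B * x + C).intervalIntegrable a b)]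
  ring

lemma integral_quad' (A B C a b : ℝ) (f : ℝ → ℝ) (hab : a ≤ b)
    (hf : ∀ x ∈ Set.Icc a b, f x = A * x ^ 2 + B * x + C) :
    ∫ x in a..b, f x =
      A / 3 * (b ^ 3 - a ^ 3) + B / 2 * (b ^ 2 - a ^ 2) + C * (b - a) := by
  rw [intervalIntegral.integral_congr (g := fun x => A * x ^ 2 + B * x + C)
    (by rw [Set.uIcc_of_le hab]; exact hf), integral_quad]

lemma key (η : ℝ) (hη : 0 < η) (s t : ℝ) (hst : s ≤ t) :
    ∫ x : ℝ, g η s x * g η t x = (2 * η ^ 3 / 3) * kappa ((t - s) / η) := by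
  have hpt : ∀ x : ℝ, g η s x * g η t x =
      (Set.Icc (t - η) (s + η)).indicator
        (fun x => (2 * |x - s| - η) * (2 * |x - t| - η)) x := by
    intro x
    by_cases h : x ∈ Set.Icc (t - η) (s + η)
    · obtain ⟨h1, h2⟩ := Set.mem_Icc.mp h
      rw [Set.indicator_of_mem (Set.mem_Icc.mpr ⟨h1, h2⟩)]
      rw [g, g, Set.indicator_of_mem (Set.mem_Icc.mpr ⟨by linarith, by linarith⟩),
        Set.indicator_of_mem (Set.mem_Icc.mpr ⟨by linarith, by linarith⟩)]
    · rw [Set.indicator_of_notMem h]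
      rw [Set.mem_Icc, not_and_or] at h
      push_neg at h
      rcases h with h | h
      · have hz : g η t x = 0 :=
          Set.indicator_of_notMem (by rw [Set.mem_Icc]; push_neg; intro; linarith) _
        rw [hz, mul_zero]
      · have hz : g η s x = 0 :=
          Set.indicator_of_notMem (by rw [Set.mem_Icc]; push_neg; intro h'; linarith) _
        rw [hz, zero_mul]
  simp_rw [hpt]
  rw [integral_indicator measurableSet_Icc]
  have hηne : η ≠ 0 := ne_of_gt hη
  by_cases hd : t - s ≤ 2 * η
  · -- nonempty overlap
    have hab : t - η ≤ s + η := by linarith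
    rw [MeasureTheory.integral_Icc_eq_integral_Ioc, ← intervalIntegral.integral_of_le hab]
    have hcont : Continuous fun x : ℝ => (2 * |x - s| - η) * (2 * |x - t| - η) := by
      fun_prop
    by_cases hd1 : t - s ≤ η
    · -- split at s and t
      have h1 : t - η ≤ s := by linarith
      have h2 : s ≤ t := hst
      have h3 : t ≤ s + η := by linarith
      rw [← intervalIntegral.integral_add_adjacent_intervals
          (b := s) (hcont.intervalIntegrable _ _) (hcont.intervalIntegrable _ _),
        ← intervalIntegral.integral_add_adjacent_intervals
          (a := s) (b := t) (hcont.intervalIntegrable _ _) (hcont.intervalIntegrable _ _)]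
      rw [integral_quad' 4 (-4*s - 4*t + 4*η) (4*s*t - 2*(s+t)*η + η^2) _ _ _ h1
          (fun x hx => by
            rw [abs_of_nonpos (by linarith [hx.2] : x - s ≤ 0),
              abs_of_nonpos (by linarith [hx.2] : x - t ≤ 0)]
            ring),
        integral_quad' (-4) (4*s + 4*t) (-4*s*t + 2*s*η - 2*t*η + η^2) _ _ _ h2
          (fun x hx => by
            rw [abs_of_nonneg (by linarith [hx.1] : 0 ≤ x - s),
              abs_of_nonpos (by linarith [hx.2] : x - t ≤ 0)]
            ring),
        integral_quad' 4 (-(4*s + 4*t + 4*η)) (4*s*t + 2*s*η + 2*t*η + η^2) _ _ _ h3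
          (fun x hx => by
            rw [abs_of_nonneg (by linarith [hx.1] : 0 ≤ x - s),
              abs_of_nonneg (by linarith [hx.1] : 0 ≤ x - t)]
            ring)]
      have hk : (t - s) / η ≤ 1 := by
        rw [div_le_one hη]; linarith
      rw [kappa, if_pos hk]
      field_simp
      ring
    · -- η < t - s ≤ 2η : single interval
      push_neg at hd1
      rw [integral_quad' (-4) (4*s + 4*t) (-4*s*t + 2*s*η - 2*t*η + η^2) _ _ _ hab
          (fun x hx => by
            rw [abs_of_nonneg (by linarith [hx.1] : 0 ≤ x - s),
              abs_of_nonpos (by linarith [hx.2] : x - t ≤ 0)]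
            ring)]
      have hk1 : ¬ (t - s) / η ≤ 1 := by
        rw [not_le, lt_div_iff₀ hη]; linarith
      have hk2 : (t - s) / η ≤ 2 := by
        rw [div_le_iff₀ hη]; linarith
      rw [kappa, if_neg hk1, if_pos hk2]
      field_simp
      ring
  · -- disjoint supports
    push_neg at hd
    rw [Set.Icc_eq_empty (by intro h; rw [← not_lt] at h; exact h (by linarith)),
      MeasureTheory.setIntegral_empty]
    have hk1 : ¬ (t - s) / η ≤ 1 := by
      rw [not_le, lt_div_iff₀ hη]; linarith
    have hk2 : ¬ (t - s) / η ≤ 2 := by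
      rw [not_le, lt_div_iff₀ hη]; linarith
    rw [kappa, if_neg hk1, if_neg hk2]
    ring

theorem kernel_integral_eq_kappa (η : ℝ) (hη : 0 < η) (s t : ℝ) :
    (3 / (2 * η ^ 3)) * ∫ x : ℝ, g η s x * g η t x = kappa (|s - t| / η) ∧
    (3 / (2 * η ^ 3)) * ∫ x : ℝ, (g η t x) ^ 2 = 1 := by
  have hηne : η ≠ 0 := ne_of_gt hη
  have hη3 : (2 : ℝ) * η ^ 3 ≠ 0 := by positivity
  constructor
  · rcases le_total s t with h | h
    · rw [key η hη s t h, abs_sub_comm, abs_of_nonneg (by linarith)]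
      field_simp
    · have hcomm : ∀ x : ℝ, g η s x * g η t x = g η t x * g η s x := fun x => mul_comm _ _
      simp_rw [hcomm]
      rw [key η hη t s h, abs_of_nonneg (by linarith)]
      field_simp
  · have hsq : ∀ x : ℝ, (g η t x) ^ 2 = g η t x * g η t x := fun x => sq (g η t x)
    simp_rw [hsq]
    rw [key η hη t t le_rfl]
    have : (t - t) / η = 0 := by simp
    rw [this, kappa, if_pos (by norm_num)]
    field_simp
    norm_num
end

section
/- Fix η > 0, t > 0. Let Z_j, j ≥ 1, be independent standard normal random variables, μ, b ∈ ℝ, σ > 0, and X_j := b + jμ + σZ_j. Define μ̂_n := (6/((nη)³ - nη)) ∑_{j=1}^{nη} (2j - nη - 1) X_{⌊nt⌋ + j} (for n such that nη is a positive integer ≥ 2). Then μ̂_n → μ almost surely as n → ∞. -/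
open Finset Filter MeasureTheory ProbabilityTheory
open scoped NNReal ENNReal

lemma sum_Icc_id' (N : ℕ) : ∑ j ∈ Icc 1 N, (j : ℝ) = N * (N + 1) / 2 := by
  induction N with
  | zero => simp
  | succ n ih =>
    rw [Finset.sum_Icc_succ_top (Nat.one_le_iff_ne_zero.mpr (Nat.succ_ne_zero n)), ih]
    push_cast; ring

lemma sum_Icc_sq' (N : ℕ) : ∑ j ∈ Icc 1 N, (j : ℝ) ^ 2 = N * (N + 1) * (2 * N + 1) / 6 := by
  induction N with
  | zero => simp
  | succ n ih =>
    rw [Finset.sum_Icc_succ_top (Nat.one_le_iff_ne_zero.mpr (Nat.succ_ne_zero n)), ih]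
    push_cast; ring

lemma sumA (N : ℕ) : ∑ j ∈ Icc 1 N, (2 * (j : ℝ) - N - 1) = 0 := by
  have h : ∑ j ∈ Icc 1 N, (2 * (j : ℝ) - N - 1)
      = ∑ j ∈ Icc 1 N, (2 * (j : ℝ)) - ∑ _j ∈ Icc 1 N, ((N : ℝ) + 1) := by
    rw [← Finset.sum_sub_distrib]
    exact Finset.sum_congr rfl fun j _ => by ring
  rw [h, ← Finset.mul_sum, sum_Icc_id', Finset.sum_const, Nat.card_Icc]
  simp only [Nat.add_sub_cancel, nsmul_eq_mul]
  ring

lemma sumB (N : ℕ) : ∑ j ∈ Icc 1 N, (j : ℝ) * (2 * (j : ℝ) - N - 1) = ((N : ℝ) ^ 3 - N) / 6 := by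
  have h : ∑ j ∈ Icc 1 N, (j : ℝ) * (2 * (j : ℝ) - N - 1)
      = ∑ j ∈ Icc 1 N, (2 * (j : ℝ) ^ 2) - ∑ j ∈ Icc 1 N, (((N : ℝ) + 1) * j) := by
    rw [← Finset.sum_sub_distrib]
    exact Finset.sum_congr rfl fun j _ => by ring
  rw [h, ← Finset.mul_sum, ← Finset.mul_sum, sum_Icc_id', sum_Icc_sq']
  ring

lemma sumC (N : ℕ) : ∑ j ∈ Icc 1 N, (2 * (j : ℝ) - N - 1) ^ 2 = ((N : ℝ) ^ 3 - N) / 3 := by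
  have h : ∑ j ∈ Icc 1 N, (2 * (j : ℝ) - N - 1) ^ 2
      = (∑ j ∈ Icc 1 N, (4 * (j : ℝ) ^ 2) - ∑ j ∈ Icc 1 N, (4 * ((N : ℝ) + 1) * j))
        + ∑ _j ∈ Icc 1 N, ((N : ℝ) + 1) ^ 2 := by
    rw [← Finset.sum_sub_distrib, ← Finset.sum_add_distrib]
    exact Finset.sum_congr rfl fun j _ => by ring
  rw [h, ← Finset.mul_sum, ← Finset.mul_sum, sum_Icc_id', sum_Icc_sq', Finset.sum_const,
    Nat.card_Icc]
  simp only [Nat.add_sub_cancel, nsmul_eq_mul]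
  ring

lemma four_mul_le_cube {x : ℝ} (hx : 2 ≤ x) : 4 * x ≤ x ^ 3 := by
  nlinarith [sq_nonneg (x - 2), sq_nonneg x]

lemma Dpos {x : ℝ} (hx : 2 ≤ x) : 0 < x ^ 3 - x := by
  nlinarith [four_mul_le_cube hx]

lemma integrable_sq_mul_exp : Integrable (fun x : ℝ => x ^ 2 * Real.exp (-(2⁻¹ : ℝ) * x ^ 2)) := by
  have h4 : Integrable (fun x : ℝ => 4 * Real.exp (-(4⁻¹ : ℝ) * x ^ 2)) :=
    (integrable_exp_neg_mul_sq (by norm_num : (0:ℝ) < 4⁻¹)).const_mul 4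
  apply h4.mono' (Continuous.aestronglyMeasurable (by continuity))
  filter_upwards with x
  have hb : x ^ 2 ≤ 4 * Real.exp ((4⁻¹ : ℝ) * x ^ 2) := by
    have := Real.add_one_le_exp ((4⁻¹ : ℝ) * x ^ 2)
    nlinarith [Real.exp_pos ((4⁻¹ : ℝ) * x ^ 2), sq_nonneg x]
  rw [Real.norm_eq_abs, abs_of_nonneg (by positivity)]
  calc x ^ 2 * Real.exp (-(2⁻¹ : ℝ) * x ^ 2)
      ≤ (4 * Real.exp ((4⁻¹ : ℝ) * x ^ 2)) * Real.exp (-(2⁻¹ : ℝ) * x ^ 2) := by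
        exact mul_le_mul_of_nonneg_right hb (Real.exp_pos _).le
    _ = 4 * Real.exp (-(4⁻¹ : ℝ) * x ^ 2) := by
        rw [mul_assoc, ← Real.exp_add]
        ring_nf

lemma memLp_two_gauss : MemLp (id : ℝ → ℝ) 2 (gaussianReal 0 1) := by
  rw [memLp_two_iff_integrable_sq aestronglyMeasurable_id]
  rw [gaussianReal_of_var_ne_zero 0 one_ne_zero]
  rw [integrable_withDensity_iff (measurable_gaussianPDF 0 1)
    (ae_of_all _ fun x => ENNReal.ofReal_lt_top)]
  have heq : (fun x : ℝ => (id x) ^ 2 * (gaussianPDF 0 1 x).toReal)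
      = fun x : ℝ => (Real.sqrt (2 * Real.pi))⁻¹ * (x ^ 2 * Real.exp (-(2⁻¹ : ℝ) * x ^ 2)) := by
    funext x
    rw [gaussianPDF, ENNReal.toReal_ofReal (gaussianPDFReal_nonneg _ _ _),
      ProbabilityTheory.gaussianPDFReal]
    rw [show -(x - 0) ^ 2 / (2 * ((1:ℝ≥0):ℝ)) = -(2⁻¹ : ℝ) * x ^ 2 by push_cast; ring]
    push_cast
    rw [mul_one]
    simp only [id_eq]
    ring
  rw [heq]
  exact integrable_sq_mul_exp.const_mul _

lemma variance_map' {Ω : Type*} [MeasurableSpace Ω] (P : Measure Ω) {X : Ω → ℝ}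
    (hX : Measurable X) : variance X P = variance id (P.map X) := by
  unfold ProbabilityTheory.variance ProbabilityTheory.evariance
  have hm : ∫ y, id y ∂(P.map X) = ∫ ω, X ω ∂P :=
    integral_map hX.aemeasurable aestronglyMeasurable_id
  rw [hm]
  rw [lintegral_map (by
    exact (measurable_id.sub_const _).nnnorm.coe_nnreal_ennreal.pow_const 2) hX]
  simp only [id_eq]

lemma aux_tendsto {Ω : Type*} [MeasurableSpace Ω] (P : Measure Ω) [IsProbabilityMeasure P]
    (T : ℕ → Ω → ℝ) (hmem : ∀ n, MemLp (T n) 2 P) (hmean : ∀ n, P[T n] = 0)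
    (K : ℝ) (hK : 0 ≤ K) (hvar : ∀ n, 2 ≤ n → variance (T n) P ≤ K / (n : ℝ) ^ 3) :
    ∀ᵐ ω ∂P, Tendsto (fun n => T n ω) atTop (nhds 0) := by
  have key : ∀ ε : ℝ, 0 < ε → ∀ᵐ ω ∂P, ∀ᶠ n in atTop, ¬ (ε ≤ |T n ω|) := by
    intro ε hε
    set A : ℕ → Set Ω := fun n => {ω | ε ≤ |T n ω|} with hA
    have hcheb : ∀ n, P (A n) ≤ ENNReal.ofReal (variance (T n) P / ε ^ 2) := by
      intro n
      have := meas_ge_le_variance_div_sq (μ := P) (hmem n) hε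
      rw [hmean n] at this
      simpa [hA] using this
    have hPA : ∀ n, 2 ≤ n → P (A n) ≤ ENNReal.ofReal (K / (n : ℝ) ^ 3 / ε ^ 2) := by
      intro n hn
      refine (hcheb n).trans (ENNReal.ofReal_le_ofReal ?_)
      exact div_le_div_of_nonneg_right (hvar n hn) (by positivity) |>.trans_eq rfl
    have hsum : (∑' n, P (A n)) ≠ ⊤ := by
      have hBle : ∀ n, P (A n) ≤
          (if n < 2 then (1 : ℝ≥0∞) else 0) + ENNReal.ofReal (K / (n : ℝ) ^ 3 / ε ^ 2) := by
        intro n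
        by_cases h : n < 2
        · simp only [h, if_true]
          exact le_add_right (prob_le_one)
        · simp only [h, if_false, zero_add]
          exact hPA n (by omega)
      refine ne_top_of_le_ne_top ?_ (ENNReal.tsum_le_tsum hBle)
      rw [ENNReal.tsum_add]
      apply ENNReal.add_ne_top.mpr
      constructor
      · have : (∑' n : ℕ, (if n < 2 then (1 : ℝ≥0∞) else 0))
            = ∑ n ∈ Finset.range 2, (if n < 2 then (1 : ℝ≥0∞) else 0) := by
          refine tsum_eq_sum ?_
          intro n hn
          simp only [Finset.mem_range, not_lt] at hn
          simp [Nat.not_lt.mpr hn]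
        rw [this]
        simp
      · have hsummable : Summable (fun n : ℕ => K / (n : ℝ) ^ 3 / ε ^ 2) := by
          have h1 : Summable (fun n : ℕ => (K / ε ^ 2) * (1 / (n : ℝ) ^ 3)) :=
            (Real.summable_one_div_nat_pow.mpr (by norm_num)).mul_left _
          refine h1.congr fun n => by field_simp
        rw [← ENNReal.ofReal_tsum_of_nonneg (fun n => by positivity) hsummable]
        exact ENNReal.ofReal_ne_top
    filter_upwards [ae_eventually_notMem hsum] with ω hω
    exact hω
  have key2 : ∀ᵐ ω ∂P, ∀ k : ℕ, ∀ᶠ n in atTop, ¬ ((1 : ℝ) / (k + 1) ≤ |T n ω|) := by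
    rw [ae_all_iff]
    intro k
    exact key (1 / (k + 1)) (by positivity)
  filter_upwards [key2] with ω hω
  rw [Metric.tendsto_atTop]
  intro ε hε
  obtain ⟨k, hk⟩ := exists_nat_one_div_lt hε
  obtain ⟨Nk, hNk⟩ := eventually_atTop.mp (hω k)
  refine ⟨Nk, fun n hn => ?_⟩
  rw [Real.dist_0_eq_abs]
  have := hNk n hn
  push_neg at this
  calc |T n ω| < 1 / (k + 1) := this
    _ < ε := hk

theorem drift_mle_strongly_consistent
    {Ω : Type*} [MeasurableSpace Ω] (P : Measure Ω) [IsProbabilityMeasure P]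
    (Z : ℕ → Ω → ℝ) (hmeas : ∀ j, Measurable (Z j))
    (hind : iIndepFun Z P)
    (hlaw : ∀ j, Measure.map (Z j) P = gaussianReal 0 1)
    (η : ℕ) (hη : 1 ≤ η) (t : ℝ) (ht : 0 < t) (μ b σ : ℝ) (hσ : 0 < σ)
    (X : ℕ → Ω → ℝ) (hX : ∀ j ω, X j ω = b + j * μ + σ * Z j ω) :
    ∀ᵐ ω ∂P, Tendsto (fun n : ℕ =>
        (6 / (((n * η : ℕ) : ℝ) ^ 3 - (n * η : ℕ))) *
          ∑ j ∈ Finset.Icc 1 (n * η),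
            (2 * (j : ℝ) - (n * η : ℕ) - 1) * X (⌊(n : ℝ) * t⌋.toNat + j) ω)
      atTop (nhds μ) := by
  set V : ℝ := variance id (gaussianReal 0 1) with hVdef
  have hV0 : 0 ≤ V := variance_nonneg _ _
  set I : ℝ := ∫ x, id x ∂(gaussianReal 0 1) with hIdef
  have hZmem : ∀ i, MemLp (Z i) 2 P := by
    intro i
    have h := memLp_two_gauss
    rw [← hlaw i] at h
    exact (memLp_map_measure_iff aestronglyMeasurable_id (hmeas i).aemeasurable).mp h
  have hZvar : ∀ i, variance (Z i) P = V := fun i => by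
    rw [variance_map' P (hmeas i), hlaw i]
  have hZint : ∀ i, ∫ ω, Z i ω ∂P = I := fun i => by
    rw [hIdef, ← hlaw i, integral_map (hmeas i).aemeasurable aestronglyMeasurable_id]
    simp only [id_eq]
  set m : ℕ → ℕ := fun n => (⌊(n : ℝ) * t⌋).toNat with hm
  set S : ℕ → Ω → ℝ := fun n ω =>
    ∑ j ∈ Icc 1 (n * η), (2 * (j : ℝ) - ((n * η : ℕ) : ℝ) - 1) * Z (m n + j) ω with hS
  set c : ℕ → ℝ := fun n => 6 / (((n * η : ℕ) : ℝ) ^ 3 - ((n * η : ℕ) : ℝ)) with hc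
  set T : ℕ → Ω → ℝ := fun n ω => (σ * c n) * S n ω with hT
  have hSmem : ∀ n, MemLp (S n) 2 P := by
    intro n
    exact memLp_finset_sum (Icc 1 (n * η)) (fun j _ => (hZmem (m n + j)).const_mul _)
  have hSmean : ∀ n, ∫ ω, S n ω ∂P = 0 := by
    intro n
    rw [hS]
    rw [integral_finset_sum _ (fun j _ => ((hZmem (m n + j)).integrable one_le_two).const_mul _)]
    simp_rw [integral_const_mul, hZint]
    rw [← Finset.sum_mul, sumA (n * η), zero_mul]
  have hTmem : ∀ n, MemLp (T n) 2 P := fun n => (hSmem n).const_mul _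
  have hTmean : ∀ n, ∫ ω, T n ω ∂P = 0 := by
    intro n
    rw [hT]
    rw [integral_const_mul, hSmean n, mul_zero]
  have hSvar : ∀ n, variance (S n) P
      = V * ((((n * η : ℕ) : ℝ)) ^ 3 - ((n * η : ℕ) : ℝ)) / 3 := by
    intro n
    have hfun : S n = ∑ j ∈ Icc 1 (n * η),
        (fun ω => (2 * (j : ℝ) - ((n * η : ℕ) : ℝ) - 1) * Z (m n + j) ω) := by
      funext ω
      rw [Finset.sum_apply]
    rw [hfun, IndepFun.variance_sum
      (fun j _ => (hZmem (m n + j)).const_mul _)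
      (by
        intro i hi j hj hij
        exact ((hind.indepFun (show m n + i ≠ m n + j by omega)).comp
          (measurable_const_mul _) (measurable_const_mul _)))]
    simp_rw [variance_const_mul, hZvar]
    rw [← Finset.sum_mul, sumC (n * η)]
    ring
  have hvar : ∀ n, 2 ≤ n → variance (T n) P ≤ (16 * σ ^ 2 * V) / (n : ℝ) ^ 3 := by
    intro n hn
    have hN2 : (2 : ℝ) ≤ ((n * η : ℕ) : ℝ) := by
      have : 2 * 1 ≤ n * η := Nat.mul_le_mul hn hη
      exact_mod_cast (by omega : 2 ≤ n * η)
    have hn3 : (n : ℝ) ≤ ((n * η : ℕ) : ℝ) := by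
      exact_mod_cast Nat.le_mul_of_pos_right n (by omega)
    have hn0 : (0 : ℝ) < (n : ℝ) := by
      exact_mod_cast (by omega : 0 < n)
    set Nr : ℝ := ((n * η : ℕ) : ℝ) with hNr
    have hD : 0 < Nr ^ 3 - Nr := Dpos hN2
    have hcube : (n : ℝ) ^ 3 ≤ Nr ^ 3 := pow_le_pow_left₀ hn0.le hn3 3
    have h4 : 4 * Nr ≤ Nr ^ 3 := four_mul_le_cube hN2
    have hDge : (3 / 4) * (n : ℝ) ^ 3 ≤ Nr ^ 3 - Nr := by linarith
    have hveq : variance (T n) P = 12 * σ ^ 2 * V / (Nr ^ 3 - Nr) := by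
      simp only [hT]
      rw [variance_const_mul (σ * c n) (S n), hSvar n]
      simp only [hc, ← hNr]
      field_simp
      ring
    rw [hveq, div_le_div_iff₀ hD (by positivity)]
    nlinarith [mul_le_mul_of_nonneg_left hDge (show (0:ℝ) ≤ 16 * σ ^ 2 * V by positivity)]
  have hae := aux_tendsto P T hTmem hTmean (16 * σ ^ 2 * V) (by positivity) hvar
  filter_upwards [hae] with ω hω
  have h1 : Tendsto (fun n => μ + T n ω) atTop (nhds (μ + 0)) := tendsto_const_nhds.add hω
  rw [add_zero] at h1
  refine h1.congr' ?_
  filter_upwards [eventually_ge_atTop 2] with n hn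
  have hN2 : (2 : ℝ) ≤ ((n * η : ℕ) : ℝ) := by
    have h2 : 2 ≤ n * η := by
      calc 2 = 2 * 1 := by omega
        _ ≤ n * η := Nat.mul_le_mul hn hη
    exact_mod_cast h2
  have hD : (0 : ℝ) < ((n * η : ℕ) : ℝ) ^ 3 - ((n * η : ℕ) : ℝ) := Dpos hN2
  have hexp : ∑ j ∈ Icc 1 (n * η), (2 * (j : ℝ) - ((n * η : ℕ) : ℝ) - 1) * X (m n + j) ω
      = (b + (m n : ℝ) * μ) * (∑ j ∈ Icc 1 (n * η), (2 * (j : ℝ) - ((n * η : ℕ) : ℝ) - 1))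
        + μ * (∑ j ∈ Icc 1 (n * η), (j : ℝ) * (2 * (j : ℝ) - ((n * η : ℕ) : ℝ) - 1))
        + σ * S n ω := by
    simp only [hS]
    rw [Finset.mul_sum, Finset.mul_sum, Finset.mul_sum, ← Finset.sum_add_distrib,
      ← Finset.sum_add_distrib]
    refine Finset.sum_congr rfl fun j hj => ?_
    rw [hX (m n + j) ω]
    push_cast
    ring
  show μ + T n ω = _
  rw [hexp, sumA (n * η), sumB (n * η)]
  simp only [hT, hc]
  set D : ℝ := ((n * η : ℕ) : ℝ) ^ 3 - ((n * η : ℕ) : ℝ) with hDdef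
  rw [mul_zero, zero_add, mul_add]
  have hcancel : 6 / D * (μ * (D / 6)) = μ := by
    field_simp
  rw [hcancel]
  ring
end
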